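/- Let Z be a set and ≤ a monomial order on the free operated monoid 𝔐(Z) whose restriction to the free monoid M(Z) ⊆ 𝔐(Z) is a monomial order on M(Z). If G ⊆ kM(Z) is a Gröbner–Shirshov basis (for associative algebras) with respect to the restriction of ≤ to M(Z), then G is also an operated Gröbner–Shirshov basis in k𝔐(Z) with respect to ≤. -/

import Mathlib

namespace OpAlg

/-- Letters of the free operated monoid `𝔐(Z)`: a letter is either a variable from `Z`
or a bracketed word `⌊w⌋`. -/
inductive OpLetter (Z : Type u) : Type u
  | var : Z → OpLetter Z
  | floor : List (OpLetter Z) → OpLetter Z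

/-- The free operated monoid `𝔐(Z)` on a set `Z`: words in variables and brackets. -/
def OpMonoid (Z : Type u) : Type u := FreeMonoid (OpLetter Z)

instance {Z : Type u} : Monoid (OpMonoid Z) :=
  inferInstanceAs (Monoid (FreeMonoid (OpLetter Z)))

/-- The variable `z` as an element of `𝔐(Z)`. -/
def OpMonoid.ofVar {Z : Type u} (z : Z) : OpMonoid Z := FreeMonoid.of (OpLetter.var z)

/-- The bracket operation `u ↦ ⌊u⌋` on `𝔐(Z)`. -/
def OpMonoid.flr {Z : Type u} (u : OpMonoid Z) : OpMonoid Z :=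
  FreeMonoid.of (OpLetter.floor (FreeMonoid.toList u))

/-- The breadth of `u ∈ 𝔐(Z)`. -/
def OpMonoid.breadth {Z : Type u} (u : OpMonoid Z) : ℕ := (FreeMonoid.toList u).length

variable {X B : Type*} [Monoid B]

mutual
  /-- Evaluation of a letter in a monoid `B` with an operator `P`, sending the
  variable `x` to `σ x`. -/
  def evalLetter (σ : X → B) (P : B → B) : OpLetter X → B
    | .var x => σ x
    | .floor w => P (evalList σ P w)
  /-- Evaluation of a list of letters (product of the letter evaluations). -/
  def evalList (σ : X → B) (P : B → B) : List (OpLetter X) → B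
    | [] => 1
    | a :: w => evalLetter σ P a * evalList σ P w
end

/-- Evaluation of a word `w ∈ 𝔐(X)` in a monoid `B` with operator `P` at `σ : X → B`. -/
def evalWord (σ : X → B) (P : B → B) (w : OpMonoid X) : B :=
  evalList σ P (FreeMonoid.toList w)

/-- Monoid-level substitution `𝔐(X) → 𝔐(Z)`, `xᵢ ↦ σ xᵢ`. -/
def substW {X Z : Type*} (σ : X → OpMonoid Z) : OpMonoid X → OpMonoid Z :=
  evalWord σ OpMonoid.flr

/-- The free unital operated algebra `k𝔐(Z)` (as a `k`-module: the monoid algebra). -/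
abbrev kOpM (k : Type*) [Field k] (Z : Type*) := MonoidAlgebra k (OpMonoid Z)

/-- The operator `P` on `k𝔐(Z)`: linear extension of `u ↦ ⌊u⌋`. -/
noncomputable def opP (k : Type*) [Field k] {Z : Type*} (f : kOpM k Z) : kOpM k Z :=
  MonoidAlgebra.ofCoeff (Finsupp.mapDomain OpMonoid.flr f.coeff)

/-- Evaluation of `φ ∈ k𝔐(X)` in a `k`-algebra `B` with operator `P` at `σ : X → B`:
`φ(σ x₁, …, σ xₙ)`. -/
noncomputable def evalPoly (k : Type*) [Field k] {X B : Type*} [Semiring B] [Module k B]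
    (σ : X → B) (P : B → B) (φ : MonoidAlgebra k (OpMonoid X)) : B :=
  φ.coeff.sum fun w c => c • evalWord σ P w

/-- A context `q ∈ 𝔐⋆(Z)` : a word in `𝔐(Z ∪ {⋆})` with exactly one occurrence of `⋆`. -/
inductive OpCtx (Z : Type u) : Type u
  | hole (u v : OpMonoid Z)
  | floor (u : OpMonoid Z) (q : OpCtx Z) (v : OpMonoid Z)

/-- Substitution `q|_w` of a word `w` for `⋆` in a context `q`. -/
def OpCtx.subst {Z : Type u} : OpCtx Z → OpMonoid Z → OpMonoid Z
  | .hole u v, w => u * w * v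
  | .floor u q v, w => u * OpMonoid.flr (q.subst w) * v

/-- Substitution `q|_f` of a polynomial `f ∈ k𝔐(Z)` for `⋆` in a context `q`. -/
noncomputable def ctxPoly (k : Type*) [Field k] {Z : Type*} (q : OpCtx Z) (f : kOpM k Z) :
    kOpM k Z :=
  MonoidAlgebra.ofCoeff (Finsupp.mapDomain q.subst f.coeff)

/-- The leading monomial of an element of a monoid algebra (the monomial `1` if the
element is a scalar or zero). -/
noncomputable def lm {k : Type*} [Field k] {G : Type*} [Monoid G] [LinearOrder G]
    (f : MonoidAlgebra k G) : G :=
  if h : f.coeff.support.Nonempty then f.coeff.support.max' h else 1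

/-- Division of an element by its leading coefficient. -/
noncomputable def monicize {k : Type*} [Field k] {G : Type*} [Monoid G] [LinearOrder G]
    (f : MonoidAlgebra k G) : MonoidAlgebra k G :=
  (f.coeff (lm f))⁻¹ • f

section GS
variable (k : Type*) [Field k] {Z : Type*} [LinearOrder (OpMonoid Z)]

/-- `f` is trivial modulo `(𝒢, w)` : `f = Σᵢ cᵢ qᵢ|_{sᵢ}` with `qᵢ|_{s̄ᵢ} < w`, `sᵢ ∈ 𝒢`. -/
def TrivialMod (𝒢 : Set (kOpM k Z)) (w : OpMonoid Z) (f : kOpM k Z) : Prop :=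
  f ∈ Submodule.span k
    {g : kOpM k Z | ∃ s ∈ 𝒢, ∃ q : OpCtx Z, g = ctxPoly k q s ∧ q.subst (lm s) < w}

/-- `𝒢 ⊆ k𝔐(Z)` is an operated Gröbner–Shirshov basis: all intersection compositions and
all inclusion compositions of (monicized) pairs of elements of `𝒢` are trivial. -/
def IsOpGS (𝒢 : Set (kOpM k Z)) : Prop :=
  (∀ f ∈ 𝒢, ∀ g ∈ 𝒢, ∀ u v w : OpMonoid Z,
      w = lm f * u → w = v * lm g →
      max (OpMonoid.breadth (lm f)) (OpMonoid.breadth (lm g)) < OpMonoid.breadth w →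
      OpMonoid.breadth w < OpMonoid.breadth (lm f) + OpMonoid.breadth (lm g) →
      TrivialMod k 𝒢 w
        (monicize f * MonoidAlgebra.single u 1 - MonoidAlgebra.single v 1 * monicize g)) ∧
  (∀ f ∈ 𝒢, ∀ g ∈ 𝒢, ∀ q : OpCtx Z, ∀ w : OpMonoid Z,
      w = lm f → w = q.subst (lm g) →
      TrivialMod k 𝒢 w (monicize f - ctxPoly k q (monicize g)))

end GS

section Assoc
variable (k : Type*) [Field k] {Z : Type*} [LinearOrder (FreeMonoid Z)]

/-- The free unital algebra `kM(Z)` (noncommutative polynomials). -/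
abbrev kM (k : Type*) [Field k] (Z : Type*) := MonoidAlgebra k (FreeMonoid Z)

/-- Triviality modulo `(G, w)` in the classical associative sense. -/
def ATrivialMod (G : Set (kM k Z)) (w : FreeMonoid Z) (f : kM k Z) : Prop :=
  f ∈ Submodule.span k
    {g : kM k Z | ∃ s ∈ G, ∃ u v : FreeMonoid Z,
      g = MonoidAlgebra.single u 1 * s * MonoidAlgebra.single v 1 ∧ u * lm s * v < w}

/-- `G ⊆ kM(Z)` is a Gröbner–Shirshov basis in the classical associative sense. -/
def IsAssocGS (G : Set (kM k Z)) : Prop :=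
  (∀ f ∈ G, ∀ g ∈ G, ∀ u v w : FreeMonoid Z,
      w = lm f * u → w = v * lm g →
      max (FreeMonoid.toList (lm f)).length (FreeMonoid.toList (lm g)).length <
        (FreeMonoid.toList w).length →
      (FreeMonoid.toList w).length <
        (FreeMonoid.toList (lm f)).length + (FreeMonoid.toList (lm g)).length →
      ATrivialMod k G w
        (monicize f * MonoidAlgebra.single u 1 - MonoidAlgebra.single v 1 * monicize g)) ∧
  (∀ f ∈ G, ∀ g ∈ G, ∀ u v w : FreeMonoid Z,
      w = lm f → w = u * lm g * v →
      ATrivialMod k G w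
        (monicize f -
          MonoidAlgebra.single u 1 * monicize g * MonoidAlgebra.single v 1))

end Assoc

/-- The embedding of the free monoid `M(Z)` into the free operated monoid `𝔐(Z)`. -/
def embW {Z : Type*} (w : FreeMonoid Z) : OpMonoid Z :=
  (FreeMonoid.map (OpLetter.var) w : FreeMonoid (OpLetter Z))

/-- The embedding `kM(Z) → k𝔐(Z)`. -/
noncomputable def embA (k : Type*) [Field k] {Z : Type*} (f : kM k Z) : kOpM k Z :=
  MonoidAlgebra.ofCoeff (Finsupp.mapDomain embW f.coeff)

end OpAlg

namespace OpAlg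
section MyAux

variable {Z : Type*}

theorem embW_toList (w : FreeMonoid Z) :
    FreeMonoid.toList (embW w) = (FreeMonoid.toList w).map OpLetter.var := rfl

theorem embW_injective : Function.Injective (embW (Z := Z)) := by
  intro a b h
  have h' : (FreeMonoid.toList a).map OpLetter.var = (FreeMonoid.toList b).map OpLetter.var :=
    congrArg FreeMonoid.toList h
  have hv : Function.Injective (OpLetter.var (Z := Z)) := fun x y hxy => by cases hxy; rfl
  exact FreeMonoid.toList.injective (List.map_injective_iff.mpr hv h')

theorem embW_mul (a b : FreeMonoid Z) : embW (a * b) = embW a * embW b :=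
  map_mul (FreeMonoid.map OpLetter.var) a b

theorem embW_one : embW (1 : FreeMonoid Z) = 1 :=
  map_one (FreeMonoid.map OpLetter.var)

theorem breadth_embW (x : FreeMonoid Z) :
    OpMonoid.breadth (embW x) = (FreeMonoid.toList x).length := by
  rw [OpMonoid.breadth, embW_toList, List.length_map]

theorem embW_mul_split {w₀ : FreeMonoid Z} {x y : OpMonoid Z} (h : embW w₀ = x * y) :
    ∃ x₀ y₀ : FreeMonoid Z, x = embW x₀ ∧ y = embW y₀ ∧ w₀ = x₀ * y₀ := by
  have h' : (FreeMonoid.toList w₀).map OpLetter.var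
      = FreeMonoid.toList x ++ FreeMonoid.toList y := congrArg FreeMonoid.toList h
  rcases List.map_eq_append_iff.mp h' with ⟨l₁, l₂, h12, h1, h2⟩
  refine ⟨FreeMonoid.ofList l₁, FreeMonoid.ofList l₂, ?_, ?_, ?_⟩
  · apply FreeMonoid.toList.injective
    rw [embW_toList, FreeMonoid.toList_ofList, h1]
  · apply FreeMonoid.toList.injective
    rw [embW_toList, FreeMonoid.toList_ofList, h2]
  · apply FreeMonoid.toList.injective
    rw [FreeMonoid.toList_mul, FreeMonoid.toList_ofList, FreeMonoid.toList_ofList, h12]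

theorem embW_prefix {s : FreeMonoid Z} {r v t : OpMonoid Z}
    (h : embW s * r = v * t)
    (hlen : (FreeMonoid.toList v).length ≤ (FreeMonoid.toList s).length) :
    ∃ v₀ : FreeMonoid Z, v = embW v₀ := by
  have h' : (FreeMonoid.toList s).map OpLetter.var ++ FreeMonoid.toList r
      = FreeMonoid.toList v ++ FreeMonoid.toList t := congrArg FreeMonoid.toList h
  refine ⟨FreeMonoid.ofList ((FreeMonoid.toList s).take (FreeMonoid.toList v).length), ?_⟩
  apply FreeMonoid.toList.injective
  have h1 := congrArg (List.take (FreeMonoid.toList v).length) h'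
  rw [List.take_append_of_le_length (by simpa using hlen), List.take_left] at h1
  rw [embW_toList, FreeMonoid.toList_ofList, List.map_take, h1]

theorem not_embW_floorCtx {u : OpMonoid Z} {q : OpCtx Z} {v x : OpMonoid Z} {w₀ : FreeMonoid Z}
    (h : embW w₀ = (OpCtx.floor u q v).subst x) : False := by
  have hmem : OpLetter.floor (FreeMonoid.toList (q.subst x))
      ∈ FreeMonoid.toList (embW w₀) := by
    rw [h]
    show _ ∈ FreeMonoid.toList (u * OpMonoid.flr (q.subst x) * v)
    erw [FreeMonoid.toList_mul, FreeMonoid.toList_mul]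
    simp [OpMonoid.flr, FreeMonoid.toList_of]
  rw [embW_toList] at hmem
  rcases List.mem_map.mp hmem with ⟨z, _, hz⟩
  exact absurd hz (by simp)

variable (k : Type*) [Field k]

theorem embA_apply [LinearOrder (FreeMonoid Z)] (f : kM k Z) (a : FreeMonoid Z) :
    (embA k f).coeff (embW a) = f.coeff a :=
  Finsupp.mapDomain_apply embW_injective f.coeff a

theorem embA_mul (x y : kM k Z) : embA k (x * y) = embA k x * embA k y := by
  unfold embA
  have he : embW (Z := Z) = ⇑(FreeMonoid.map (OpLetter.var (Z := Z))) := rfl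
  rw [he]
  exact MonoidAlgebra.mapDomain_mul (FreeMonoid.map (OpLetter.var (Z := Z))) x y

theorem embA_single (u : FreeMonoid Z) (c : k) :
    embA k (MonoidAlgebra.single u c) = MonoidAlgebra.single (embW u) c :=
  MonoidAlgebra.mapDomain_single

theorem embA_sub (x y : kM k Z) : embA k (x - y) = embA k x - embA k y :=
  congrArg MonoidAlgebra.ofCoeff (map_sub (Finsupp.lmapDomain k k (embW (Z := Z))) x.coeff y.coeff)

section Ord
variable [LinearOrder (OpMonoid Z)] [LinearOrder (FreeMonoid Z)]
variable (hmono : Monotone (embW (Z := Z)))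

include hmono in
theorem lm_embA (f : kM k Z) : lm (embA k f) = embW (lm f) := by
  have hsupp : (embA k f).coeff.support = f.coeff.support.image embW :=
    Finsupp.mapDomain_support_of_injective embW_injective f.coeff
  by_cases h : f.coeff.support.Nonempty
  · have h2 : (embA k f).coeff.support.Nonempty := by rw [hsupp]; exact h.image _
    rw [lm, lm, dif_pos h, dif_pos h2]
    apply le_antisymm
    · apply Finset.max'_le
      intro y hy
      rw [hsupp] at hy
      rcases Finset.mem_image.mp hy with ⟨a, ha, rfl⟩
      exact hmono (Finset.le_max' _ a ha)
    · apply Finset.le_max'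
      rw [hsupp]
      exact Finset.mem_image_of_mem _ (f.coeff.support.max'_mem h)
  · have h2 : ¬ (embA k f).coeff.support.Nonempty := by
      rw [hsupp]; simpa [Finset.image_nonempty] using h
    rw [lm, lm, dif_neg h, dif_neg h2, embW_one]

include hmono in
theorem monicize_embA (f : kM k Z) : monicize (embA k f) = embA k (monicize f) := by
  rw [monicize, monicize, lm_embA k hmono, embA_apply]
  exact congrArg MonoidAlgebra.ofCoeff (Finsupp.mapDomain_smul (f.coeff (lm f))⁻¹ f.coeff).symm

theorem ctxPoly_hole (a b : OpMonoid Z) (F : kOpM k Z) :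
    ctxPoly k (OpCtx.hole a b) F =
      MonoidAlgebra.single a 1 * F * MonoidAlgebra.single b 1 := by
  induction F using MonoidAlgebra.induction_linear with
  | zero => simp [ctxPoly]
  | add f g hf hg =>
      rw [ctxPoly, MonoidAlgebra.coeff_add, Finsupp.mapDomain_add, MonoidAlgebra.ofCoeff_add, ← ctxPoly, ← ctxPoly, hf, hg, mul_add, add_mul]
  | single x c =>
      rw [ctxPoly, MonoidAlgebra.coeff_single, Finsupp.mapDomain_single, MonoidAlgebra.ofCoeff_single,
        MonoidAlgebra.single_mul_single,
        MonoidAlgebra.single_mul_single, one_mul, mul_one]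
      rfl

variable (hlt : ∀ a b : FreeMonoid Z, a < b ↔ embW a < embW b)

include hlt in
theorem trivial_transfer (G : Set (kM k Z)) (w₀ : FreeMonoid Z) (f₀ : kM k Z)
    (h : ATrivialMod k G w₀ f₀) :
    TrivialMod k (embA k '' G) (embW w₀) (embA k f₀) := by
  have hmono : Monotone (embW (Z := Z)) := fun a b hab => by
    rcases eq_or_lt_of_le hab with rfl | hlt'
    · exact le_rfl
    · exact ((hlt a b).mp hlt').le
  have key : embA k f₀ ∈ Submodule.map (MonoidAlgebra.mapDomainLinearMap k k (embW (Z := Z)))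
      (Submodule.span k {g : kM k Z | ∃ s ∈ G, ∃ u v : FreeMonoid Z,
        g = MonoidAlgebra.single u 1 * s * MonoidAlgebra.single v 1 ∧ u * lm s * v < w₀}) :=
    ⟨f₀, h, rfl⟩
  rw [Submodule.map_span] at key
  refine Submodule.span_mono ?_ key
  rintro _ ⟨g, ⟨s, hs, u, v, rfl, hlt'⟩, rfl⟩
  refine ⟨embA k s, ⟨s, hs, rfl⟩, OpCtx.hole (embW u) (embW v), ?_, ?_⟩
  · show embA k (MonoidAlgebra.single u 1 * s * MonoidAlgebra.single v 1) = _
    rw [embA_mul, embA_mul, embA_single, embA_single, ctxPoly_hole]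
  · show embW u * lm (embA k s) * embW v < embW w₀
    rw [lm_embA k hmono, ← embW_mul, ← embW_mul]
    exact (hlt _ _).mp hlt'

end Ord
end MyAux
end OpAlg

open OpAlg in
/-- Let `≤` be a monomial order on `𝔐(Z)` whose restriction to the free
monoid `M(Z) ⊆ 𝔐(Z)` is a (monomial) order on `M(Z)`. If `G ⊆ kM(Z)` is a classical
Gröbner–Shirshov basis with respect to the restriction of `≤`, then `G` is also an operated
Gröbner–Shirshov basis in `k𝔐(Z)` with respect to `≤`. -/
theorem assocGS_is_opGS
    (k : Type*) [Field k] (Z : Type*)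
    [LinearOrder (OpMonoid Z)] [LinearOrder (FreeMonoid Z)]
    -- `≤` is a monomial order on `𝔐(Z)`:
    (hwf : WellFounded ((· < ·) : OpMonoid Z → OpMonoid Z → Prop))
    (hmono : ∀ u v : OpMonoid Z, u < v → ∀ q : OpCtx Z, q.subst u < q.subst v)
    -- the order on `M(Z)` is the restriction of `≤` along `M(Z) ⊆ 𝔐(Z)`:
    (hres : ∀ a b : FreeMonoid Z, a ≤ b ↔ embW a ≤ embW b)
    (G : Set (kM k Z)) (hG : IsAssocGS k G) :
    IsOpGS k (embA k '' G) := by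
  have hmonoW : Monotone (embW (Z := Z)) := fun a b hab => (hres a b).mp hab
  have hlt : ∀ a b : FreeMonoid Z, a < b ↔ embW a < embW b := fun a b => by
    rw [lt_iff_not_ge, lt_iff_not_ge, hres]
  constructor
  · -- intersection compositions
    rintro f ⟨f', hf', rfl⟩ g ⟨g', hg', rfl⟩ u v w hwu hwv hmax hsum
    rw [lm_embA k hmonoW] at hwu hmax hsum
    rw [lm_embA k hmonoW] at hwv hmax hsum
    -- v is a prefix of embW (lm f')
    have hvlen : (FreeMonoid.toList v).length ≤ (FreeMonoid.toList (lm f')).length := by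
      have h1 : OpMonoid.breadth w
          = (FreeMonoid.toList v).length + (FreeMonoid.toList (lm g')).length := by
        erw [hwv, OpMonoid.breadth, FreeMonoid.toList_mul, List.length_append, embW_toList,
          List.length_map]
      rw [breadth_embW, breadth_embW] at hsum
      omega
    obtain ⟨v', rfl⟩ : ∃ v', v = embW v' := by
      refine embW_prefix (s := lm f') (r := u) (t := embW (lm g')) ?_ hvlen
      rw [← hwu, ← hwv]
    set w₀ : FreeMonoid Z := v' * lm g' with hw₀
    have hwemb : w = embW w₀ := by rw [hwv, embW_mul]
    obtain ⟨x₀, u₀, hx, hu, hw⟩ := embW_mul_split (hwemb ▸ hwu)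
    have hx' : x₀ = lm f' := embW_injective hx.symm
    subst hx' hu
    rw [breadth_embW, breadth_embW] at hmax hsum
    have hmax' : max (FreeMonoid.toList (lm f')).length (FreeMonoid.toList (lm g')).length
        < (FreeMonoid.toList w₀).length := by
      rw [hwemb, breadth_embW] at hmax; exact hmax
    have hsum' : (FreeMonoid.toList w₀).length
        < (FreeMonoid.toList (lm f')).length + (FreeMonoid.toList (lm g')).length := by
      rw [hwemb, breadth_embW] at hsum; exact hsum
    have hA := hG.1 f' hf' g' hg' u₀ v' w₀ hw hw₀ hmax' hsum'
    have := trivial_transfer k hlt G w₀ _ hA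
    rw [hwemb]
    have heq : embA k (monicize f' * MonoidAlgebra.single u₀ 1
          - MonoidAlgebra.single v' 1 * monicize g')
        = monicize (embA k f') * MonoidAlgebra.single (embW u₀) 1
          - MonoidAlgebra.single (embW v') 1 * monicize (embA k g') := by
      rw [embA_sub, embA_mul, embA_mul, embA_single, embA_single,
        monicize_embA k hmonoW, monicize_embA k hmonoW]
    rw [← heq]
    exact this
  · -- inclusion compositions
    rintro f ⟨f', hf', rfl⟩ g ⟨g', hg', rfl⟩ q w hw1 hw2
    rw [lm_embA k hmonoW] at hw1
    rw [lm_embA k hmonoW] at hw2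
    cases q with
    | floor a q' b => exact absurd (hw1 ▸ hw2) (fun h => not_embW_floorCtx h)
    | hole a b =>
      have hsub : w = a * embW (lm g') * b := hw2
      have hsplit : embW (lm f') = a * (embW (lm g') * b) := by
        rw [← hw1, hsub, mul_assoc]
      obtain ⟨a₀, r₀, ha, hr, hfr⟩ := embW_mul_split hsplit
      obtain ⟨m₀, b₀, hm, hb, hrb⟩ := embW_mul_split hr.symm
      have hm' : m₀ = lm g' := embW_injective hm.symm
      subst hm' ha hb
      have hf0 : lm f' = a₀ * lm g' * b₀ := by rw [hfr, hrb, mul_assoc]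
      have hA := hG.2 f' hf' g' hg' a₀ b₀ (lm f') rfl hf0
      have := trivial_transfer k hlt G (lm f') _ hA
      rw [hw1]
      have heq : embA k (monicize f'
            - MonoidAlgebra.single a₀ 1 * monicize g' * MonoidAlgebra.single b₀ 1)
          = monicize (embA k f')
            - ctxPoly k (OpCtx.hole (embW a₀) (embW b₀)) (monicize (embA k g')) := by
        rw [embA_sub, embA_mul, embA_mul, embA_single, embA_single,
          monicize_embA k hmonoW, monicize_embA k hmonoW, ctxPoly_hole]
      rw [← heq]
      exact this
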